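/- With notation as above, for each root a, the element n(a^∨)·a^∨ lies in the sublattice Λ₀ := {λ ∈ Λ | B(λ, b^∨) ≡ 0 mod n for all simple coroots b^∨}, where n(a^∨) = n/gcd(n, Q(a^∨)). -/

import Mathlib

/-- With `Q` a Weyl-invariant quadratic form on the coweight
lattice `Λ`, `B` its associated bilinear form (ℤ-bilinear, and satisfying
`B(λ, a∨) = ⟨λ,a⟩·Q(a∨)` for the root `a` with coroot `a∨`), and `n ≥ 1`,
the element `n(a∨)·a∨` (with `n(a∨) = n / gcd(n, Q(a∨))`) lies in
`Λ₀ = {λ | B(λ, b∨) ≡ 0 mod n for every simple coroot b∨}`. -/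
theorem na_smul_coroot_mem_Lambda_zero
    {Λ : Type*} [AddCommGroup Λ] (n : ℕ) (hn : 0 < n)
    (Q : Λ → ℤ) (B : Λ → Λ → ℤ)
    (hB : ∀ x y, B x y = Q (x + y) - Q x - Q y)
    (hBsmul : ∀ (k : ℤ) (x y : Λ), B (k • x) y = k * B x y)
    {ι : Type*} (coroot : ι → Λ)  -- the simple coroots b∨
    (av : Λ) (pair : Λ → ℤ)       -- coroot a∨ of a root a, pairing ⟨·, a⟩
    (hfact : ∀ lam, B lam av = pair lam * Q av) :
    ∀ i : ι, (n : ℤ) ∣ B (((n / Int.gcd (n : ℤ) (Q av) : ℕ) : ℤ) • av) (coroot i) := by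
  intro i
  set g : ℕ := Int.gcd (n : ℤ) (Q av) with hg
  have hsymm : B av (coroot i) = B (coroot i) av := by
    rw [hB, hB, add_comm]; ring
  rw [hBsmul, hsymm, hfact]
  -- n ∣ (n/g) * (pair (coroot i) * Q av)
  have hgn : g ∣ n := Int.natCast_dvd_natCast.mp (Int.gcd_dvd_left (n : ℤ) (Q av))
  have hgQ : (g : ℤ) ∣ Q av := Int.gcd_dvd_right (n : ℤ) (Q av)
  obtain ⟨m, hm⟩ := hgQ
  have hmul : ((n / g : ℕ) : ℤ) * (g : ℤ) = (n : ℤ) := by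
    exact_mod_cast Nat.div_mul_cancel hgn
  calc (n : ℤ) ∣ (n : ℤ) * (pair (coroot i) * m) := Dvd.intro _ rfl
  _ = ((n / g : ℕ) : ℤ) * (pair (coroot i) * Q av) := by
      rw [hm, ← hmul]; ring
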